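/- Let f : [0,θ] → ℝ be bounded and monotone. Then var(Uf) ≤ (1/(m+1))·var(f), where for a function g : [0,θ] → ℝ, var(g) denotes the total variation of g on [0,θ], i.e. var(g) = sup Σ_{i=1}^{k−1} |g(t_i) − g(t_{i−1})| over all finite increasing sequences t_0 < t_1 < ⋯ < t_{k−1} in [0,θ]. -/

import Mathlib

open MeasureTheory Real Set
open scoped ENNReal

/-- θ = 1/√m. -/
noncomputable def theta (m : ℕ) : ℝ := 1 / Real.sqrt m

/-- u_i(x) = 1/(iθ + x). -/
noncomputable def uMap (m i : ℕ) (x : ℝ) : ℝ := 1 / (i * theta m + x)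

/-- P_i(x) = (1+θx)/((x+iθ)(x+(i+1)θ)). -/
noncomputable def Pfun (m i : ℕ) (x : ℝ) : ℝ :=
  (1 + theta m * x) / ((x + i * theta m) * (x + (i + 1) * theta m))

/-- The Perron-Frobenius operator Uf(x) = Σ_{i≥m} P_i(x)·f(u_i(x)). -/
noncomputable def Uop (m : ℕ) (f : ℝ → ℝ) (x : ℝ) : ℝ :=
  ∑' i : ℕ, Pfun m (i + m) x * f (uMap m (i + m) x)

noncomputable def Ffun (m k : ℕ) (x : ℝ) : ℝ :=
  (1 + theta m * x) / (theta m * (x + k * theta m))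

variable {m : ℕ}

lemma theta_pos (hm : 2 ≤ m) : 0 < theta m := by
  have h : (0:ℝ) < m := by exact_mod_cast Nat.lt_of_lt_of_le (by norm_num) hm
  simp only [theta]
  positivity

lemma theta_sq (hm : 2 ≤ m) : (m:ℝ) * theta m ^ 2 = 1 := by
  have h : (0:ℝ) < m := by exact_mod_cast Nat.lt_of_lt_of_le (by norm_num) hm
  have hs : Real.sqrt m ^ 2 = m := Real.sq_sqrt h.le
  have hs0 : Real.sqrt m ≠ 0 := by positivity
  simp only [theta]
  field_simp
  exact hs.symm

lemma den_pos (hm : 2 ≤ m) {k : ℕ} (hk : m ≤ k) {x : ℝ} (hx : 0 ≤ x) :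
    0 < x + k * theta m := by
  have ht := theta_pos hm
  have hk' : (2:ℝ) ≤ k := by exact_mod_cast le_trans hm hk
  nlinarith

lemma P_eq_F_sub (hm : 2 ≤ m) {k : ℕ} (hk : m ≤ k) {x : ℝ} (hx : 0 ≤ x) :
    Pfun m k x = Ffun m k x - Ffun m (k+1) x := by
  have ht := theta_pos hm
  have h1 := den_pos hm hk hx
  have h2 := den_pos hm (le_trans hk (Nat.le_succ k)) hx
  simp only [Pfun, Ffun]
  push_cast
  push_cast at h2
  rw [div_sub_div _ _ (mul_pos ht h1).ne' (mul_pos ht h2).ne', div_eq_div_iff (mul_pos h1 h2).ne' (by positivity)]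
  ring

lemma F_m_one (hm : 2 ≤ m) {x : ℝ} (hx : 0 ≤ x) : Ffun m m x = 1 := by
  have ht := theta_pos hm
  have h2 := theta_sq hm
  have key : theta m * (x + m * theta m) = 1 + theta m * x := by
    linear_combination h2
  rw [Ffun, key, div_self (by nlinarith)]

lemma F_pos (hm : 2 ≤ m) {k : ℕ} (hk : m ≤ k) {x : ℝ} (hx : 0 ≤ x) :
    0 < Ffun m k x := by
  have ht := theta_pos hm
  have h1 := den_pos hm hk hx
  have : 0 < 1 + theta m * x := by nlinarith
  exact div_pos this (by positivity)

lemma F_le_one (hm : 2 ≤ m) {k : ℕ} (hk : m ≤ k) {x : ℝ} (hx : 0 ≤ x) :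
    Ffun m k x ≤ 1 := by
  have ht := theta_pos hm
  have h1 := den_pos hm hk hx
  have h2 := theta_sq hm
  have hmk : (m:ℝ) ≤ k := by exact_mod_cast hk
  have hm0 : (0:ℝ) < m := by exact_mod_cast Nat.lt_of_lt_of_le (by norm_num) hm
  rw [Ffun, div_le_one (by positivity)]
  have hk2 : 1 ≤ (k:ℝ) * theta m ^ 2 := by
    rw [← h2]; nlinarith [sq_nonneg (theta m)]
  nlinarith

lemma F_mono (hm : 2 ≤ m) {k : ℕ} (hk : m ≤ k) {x y : ℝ} (hx : 0 ≤ x) (hxy : x ≤ y) :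
    Ffun m k x ≤ Ffun m k y := by
  have ht := theta_pos hm
  have h1 := den_pos hm hk hx
  have h2 := den_pos hm hk (le_trans hx hxy)
  have hsq := theta_sq hm
  have hmk : (m:ℝ) ≤ k := by exact_mod_cast hk
  have hm0 : (0:ℝ) < m := by exact_mod_cast Nat.lt_of_lt_of_le (by norm_num) hm
  have hk2 : 1 ≤ (k:ℝ) * theta m ^ 2 := by
    rw [← hsq]; nlinarith [sq_nonneg (theta m)]
  rw [Ffun, Ffun, div_le_div_iff₀ (by positivity) (by positivity)]
  nlinarith [mul_nonneg (sub_nonneg.2 hxy) (sub_nonneg.2 hk2)]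

lemma F_tendsto (hm : 2 ≤ m) (x : ℝ) :
    Filter.Tendsto (fun i : ℕ => Ffun m (i + m) x) Filter.atTop (nhds 0) := by
  have ht := theta_pos hm
  have hden : Filter.Tendsto (fun i : ℕ => theta m * (x + ((i + m : ℕ) : ℝ) * theta m))
      Filter.atTop Filter.atTop := by
    apply Filter.Tendsto.const_mul_atTop ht
    apply Filter.tendsto_atTop_add_const_left
    apply Filter.Tendsto.atTop_mul_const ht
    exact tendsto_natCast_atTop_atTop.comp (Filter.tendsto_add_atTop_nat m)
  simpa [Ffun] using Filter.Tendsto.div_atTop (tendsto_const_nhds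
    (x := 1 + theta m * x) (f := Filter.atTop)) hden

lemma sum_range_P (hm : 2 ≤ m) {x : ℝ} (hx : 0 ≤ x) (n : ℕ) :
    ∑ i ∈ Finset.range n, Pfun m (i + m) x = 1 - Ffun m (n + m) x := by
  have : ∀ i, Pfun m (i + m) x = Ffun m (i + m) x - Ffun m ((i+1) + m) x := by
    intro i
    rw [P_eq_F_sub hm (Nat.le_add_left m i) hx]
    congr 2
    omega
  simp only [this]
  rw [Finset.sum_range_sub' (fun i => Ffun m (i + m) x) n]
  rw [show 0 + m = m from by omega, F_m_one hm hx]

lemma P_nonneg (hm : 2 ≤ m) {k : ℕ} (hk : m ≤ k) {x : ℝ} (hx : 0 ≤ x) :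
    0 ≤ Pfun m k x := by
  have ht := theta_pos hm
  have h1 := den_pos hm hk hx
  have h2 := den_pos hm (le_trans hk (Nat.le_succ k)) hx
  push_cast at h2
  rw [Pfun]
  have : (0:ℝ) ≤ 1 + theta m * x := by nlinarith
  positivity

lemma summable_P (hm : 2 ≤ m) {x : ℝ} (hx : 0 ≤ x) :
    Summable (fun i : ℕ => Pfun m (i + m) x) := by
  apply summable_of_sum_range_le (c := 1)
    (fun i => P_nonneg hm (Nat.le_add_left m i) hx)
  intro n
  rw [sum_range_P hm hx n]
  have := F_pos hm (Nat.le_add_left m n) hx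
  linarith

lemma hasSum_P (hm : 2 ≤ m) {x : ℝ} (hx : 0 ≤ x) :
    HasSum (fun i : ℕ => Pfun m (i + m) x) 1 := by
  rw [(summable_P hm hx).hasSum_iff_tendsto_nat]
  simp only [sum_range_P hm hx]
  simpa using tendsto_const_nhds.sub (F_tendsto hm x)

lemma u_den_pos (hm : 2 ≤ m) {k : ℕ} (hk : m ≤ k) {x : ℝ} (hx : 0 ≤ x) :
    0 < (k:ℝ) * theta m + x := by
  have := den_pos hm hk hx; linarith

lemma u_mem (hm : 2 ≤ m) {k : ℕ} (hk : m ≤ k) {x : ℝ} (hx : x ∈ Icc 0 (theta m)) :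
    uMap m k x ∈ Icc 0 (theta m) := by
  have ht := theta_pos hm
  have hd := u_den_pos hm hk hx.1
  have h2 := theta_sq hm
  have hmk : (m:ℝ) ≤ k := by exact_mod_cast hk
  constructor
  · rw [uMap]; positivity
  · rw [uMap, div_le_iff₀ hd]
    have hk2 : 1 ≤ (k:ℝ) * theta m ^ 2 := by
      rw [← h2]; nlinarith [sq_nonneg (theta m)]
    nlinarith [hx.1]

lemma u_anti_x (hm : 2 ≤ m) {k : ℕ} (hk : m ≤ k) {x y : ℝ} (hx : 0 ≤ x) (hxy : x ≤ y) :
    uMap m k y ≤ uMap m k x := by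
  have h1 := u_den_pos hm hk hx
  exact one_div_le_one_div_of_le h1 (by linarith)

lemma u_anti_k (hm : 2 ≤ m) {k : ℕ} (hk : m ≤ k) {x : ℝ} (hx : 0 ≤ x) :
    uMap m (k+1) x ≤ uMap m k x := by
  have h1 := u_den_pos hm hk hx
  have ht := theta_pos hm
  apply one_div_le_one_div_of_le h1
  push_cast
  nlinarith

lemma summable_P_mul (hm : 2 ≤ m) {x : ℝ} (hx : 0 ≤ x) {g : ℕ → ℝ} {C : ℝ}
    (hg : ∀ i, |g i| ≤ C) :
    Summable (fun i : ℕ => Pfun m (i + m) x * g i) := by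
  apply Summable.of_norm_bounded (g := fun i => C * Pfun m (i + m) x)
    ((summable_P hm hx).mul_left C)
  intro i
  have hP := P_nonneg hm (Nat.le_add_left m i) hx
  rw [Real.norm_eq_abs, abs_mul, abs_of_nonneg hP, mul_comm]
  exact mul_le_mul_of_nonneg_right (hg i) hP

lemma Uop_anti (hm : 2 ≤ m) {f : ℝ → ℝ} {C : ℝ}
    (hC : ∀ x ∈ Icc 0 (theta m), |f x| ≤ C)
    (hf : MonotoneOn f (Icc 0 (theta m))) :
    AntitoneOn (Uop m f) (Icc 0 (theta m)) := by
  intro x hx y hy hxy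
  have hum : ∀ (i : ℕ) (z : ℝ), z ∈ Icc 0 (theta m) → uMap m (i+m) z ∈ Icc 0 (theta m) :=
    fun i z hz => u_mem hm (Nat.le_add_left m i) hz
  set a : ℕ → ℝ := fun i => f (uMap m (i + m) x) with ha
  set b : ℕ → ℝ := fun i => f (uMap m (i + m) y) with hb
  have haC : ∀ i, |a i| ≤ C := fun i => hC _ (hum i x hx)
  have hbC : ∀ i, |b i| ≤ C := fun i => hC _ (hum i y hy)
  have hba : ∀ i, b i ≤ a i := fun i =>
    hf (hum i y hy) (hum i x hx) (u_anti_x hm (Nat.le_add_left m i) hx.1 hxy)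
  have ha_anti : ∀ i, a (i+1) ≤ a i := by
    intro i
    have e : (i+1)+m = (i+m)+1 := by omega
    have h1 : uMap m ((i+1)+m) x ≤ uMap m (i+m) x := by
      rw [e]; exact u_anti_k hm (Nat.le_add_left m i) hx.1
    exact hf (hum (i+1) x hx) (hum i x hx) h1
  have Sya : Summable (fun i => Pfun m (i+m) y * a i) := summable_P_mul hm hy.1 haC
  have Syb : Summable (fun i => Pfun m (i+m) y * b i) := summable_P_mul hm hy.1 hbC
  have Sxa : Summable (fun i => Pfun m (i+m) x * a i) := summable_P_mul hm hx.1 haC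
  have step1 : ∑' i, Pfun m (i+m) y * b i ≤ ∑' i, Pfun m (i+m) y * a i :=
    Summable.tsum_le_tsum (fun i => mul_le_mul_of_nonneg_left (hba i)
      (P_nonneg hm (Nat.le_add_left m i) hy.1)) Syb Sya
  -- tail sums difference
  set T : ℕ → ℝ := fun i => Ffun m (i+m) x - Ffun m (i+m) y with hT
  have hT0 : T 0 = 0 := by
    simp only [hT, Nat.zero_add, F_m_one hm hx.1, F_m_one hm hy.1, sub_self]
  have hTnonpos : ∀ i, T i ≤ 0 := fun i =>
    sub_nonpos.2 (F_mono hm (Nat.le_add_left m i) hx.1 hxy)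
  have hTabs : ∀ i, -T i ≤ 1 := by
    intro i
    have h1 := F_le_one hm (Nat.le_add_left m i) hy.1
    have h2 := F_pos hm (Nat.le_add_left m i) hx.1
    simp only [hT]; linarith
  have hTtend : Filter.Tendsto T Filter.atTop (nhds 0) := by
    simpa using (F_tendsto hm x).sub (F_tendsto hm y)
  have hc : ∀ i, Pfun m (i+m) x - Pfun m (i+m) y = T i - T (i+1) := by
    intro i
    have e : (i+1)+m = (i+m)+1 := by omega
    rw [P_eq_F_sub hm (Nat.le_add_left m i) hx.1,
      P_eq_F_sub hm (Nat.le_add_left m i) hy.1]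
    simp only [hT, e]
    ring
  set d : ℕ → ℝ := fun i => T (i+1) * (a (i+1) - a i) with hd
  have hd0 : ∀ i, 0 ≤ d i := fun i =>
    mul_nonneg_of_nonpos_of_nonpos (hTnonpos (i+1)) (sub_nonpos.2 (ha_anti i))
  have hd_le : ∀ i, d i ≤ a i - a (i+1) := by
    intro i
    have h1 := hTabs (i+1)
    have h2 := hTnonpos (i+1)
    have h3 := ha_anti i
    simp only [hd]
    nlinarith
  have hC0 : 0 ≤ C := le_trans (abs_nonneg _) (haC 0)
  have summable_d : Summable d := by
    apply summable_of_sum_range_le (c := 2*C) hd0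
    intro n
    calc ∑ i ∈ Finset.range n, d i ≤ ∑ i ∈ Finset.range n, (a i - a (i+1)) :=
          Finset.sum_le_sum (fun i _ => hd_le i)
      _ = a 0 - a n := Finset.sum_range_sub' a n
      _ ≤ 2*C := by
          have := haC 0; have := haC n
          have h0 := abs_le.1 (haC 0); have hn := abs_le.1 (haC n)
          linarith
  have hs_tend : Filter.Tendsto (fun i => T i * a i) Filter.atTop (nhds 0) := by
    refine squeeze_zero_norm (fun i => ?_) (by simpa using (hTtend.abs).mul_const C :
      Filter.Tendsto (fun i => |T i| * C) Filter.atTop (nhds 0))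
    rw [norm_mul, Real.norm_eq_abs, Real.norm_eq_abs]
    exact mul_le_mul_of_nonneg_left (haC i) (abs_nonneg _)
  have hca_summ : Summable (fun i => (Pfun m (i+m) x - Pfun m (i+m) y) * a i) := by
    have := Sxa.sub Sya
    simpa [sub_mul] using this
  have hsdiff_summ : Summable (fun i => T i * a i - T (i+1) * a (i+1)) := by
    have e : (fun i => T i * a i - T (i+1) * a (i+1))
        = fun i => (Pfun m (i+m) x - Pfun m (i+m) y) * a i - d i := by
      funext i
      rw [hc i]
      simp only [hd]
      ring
    rw [e]
    exact hca_summ.sub summable_d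
  have htel : HasSum (fun i => T i * a i - T (i+1) * a (i+1)) 0 := by
    rw [hsdiff_summ.hasSum_iff_tendsto_nat]
    have e : ∀ n, ∑ i ∈ Finset.range n, (T i * a i - T (i+1)*a (i+1))
        = T 0 * a 0 - T n * a n := fun n => Finset.sum_range_sub' (fun i => T i * a i) n
    simp only [e, hT0, zero_mul, zero_sub]
    simpa using hs_tend.neg
  have hkey : (0:ℝ) ≤ ∑' i, (Pfun m (i+m) x - Pfun m (i+m) y) * a i := by
    have e : (fun i => (Pfun m (i+m) x - Pfun m (i+m) y) * a i)
        = fun i => (T i * a i - T (i+1) * a (i+1)) + d i := by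
      funext i
      rw [hc i]
      simp only [hd]
      ring
    rw [e, Summable.tsum_add htel.summable summable_d, htel.tsum_eq, zero_add]
    exact tsum_nonneg hd0
  have step2 : ∑' i, Pfun m (i+m) y * a i ≤ ∑' i, Pfun m (i+m) x * a i := by
    rw [← sub_nonneg, ← Summable.tsum_sub Sxa Sya]
    calc (0:ℝ) ≤ ∑' i, (Pfun m (i+m) x - Pfun m (i+m) y) * a i := hkey
      _ = ∑' i, (Pfun m (i+m) x * a i - Pfun m (i+m) y * a i) := by
          congr 1; funext i; ring
  calc Uop m f y = ∑' i, Pfun m (i+m) y * b i := rfl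
    _ ≤ ∑' i, Pfun m (i+m) y * a i := step1
    _ ≤ ∑' i, Pfun m (i+m) x * a i := step2
    _ = Uop m f x := rfl

lemma m_cast_pos (hm : 2 ≤ m) : (0:ℝ) < m := by
  exact_mod_cast Nat.lt_of_lt_of_le (by norm_num) hm

lemma P_theta (hm : 2 ≤ m) (k : ℕ) :
    Pfun m k (theta m) = (((m:ℝ)+1)/m) * Pfun m (k+1) 0 := by
  have ht := theta_pos hm
  have h2 := theta_sq hm
  have hm0 := m_cast_pos hm
  have ht0 : theta m ≠ 0 := ne_of_gt ht
  simp only [Pfun]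
  push_cast
  have hk1 : (0:ℝ) < (k:ℝ)+1 := by positivity
  have hk2 : (0:ℝ) < (k:ℝ)+2 := by positivity
  field_simp
  linear_combination (theta m^2*((k:ℝ)^2+3*k+2)) * h2

lemma u_theta (hm : 2 ≤ m) (k : ℕ) :
    uMap m k (theta m) = uMap m (k+1) 0 := by
  simp only [uMap]
  congr 1
  push_cast
  ring

lemma P_m_zero (hm : 2 ≤ m) : Pfun m m 0 = 1/((m:ℝ)+1) := by
  have ht := theta_pos hm
  have h2 := theta_sq hm
  have hm0 := m_cast_pos hm
  have ht0 : theta m ≠ 0 := ne_of_gt ht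
  simp only [Pfun]
  field_simp
  linear_combination (-((m:ℝ)+1)) * h2

lemma u_m_zero (hm : 2 ≤ m) : uMap m m 0 = theta m := by
  have ht := theta_pos hm
  have h2 := theta_sq hm
  have hm0 := m_cast_pos hm
  rw [uMap, add_zero, div_eq_iff (by positivity)]
  linear_combination -h2

set_option maxHeartbeats 1000000 in
lemma Uop_endpoint (hm : 2 ≤ m) {f : ℝ → ℝ} {C : ℝ}
    (hC : ∀ x ∈ Icc 0 (theta m), |f x| ≤ C)
    (hf : MonotoneOn f (Icc 0 (theta m))) :
    Uop m f 0 - Uop m f (theta m) ≤ (f (theta m) - f 0)/((m:ℝ)+1) := by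
  have ht := theta_pos hm
  have hm0 := m_cast_pos hm
  have h0mem : (0:ℝ) ∈ Icc 0 (theta m) := ⟨le_refl _, ht.le⟩
  have hθmem : theta m ∈ Icc 0 (theta m) := ⟨ht.le, le_refl _⟩
  have hz : (0:ℝ) ≤ 0 := le_refl _
  set g : ℕ → ℝ := fun i => Pfun m (i+m) 0 * f (uMap m (i+m) 0) with hg
  have hgb : ∀ i, |f (uMap m (i+m) 0)| ≤ C := fun i =>
    hC _ (u_mem hm (Nat.le_add_left m i) h0mem)
  have Sg : Summable g := summable_P_mul hm hz hgb
  have Sg1 : Summable (fun i => g (i+1)) := (summable_nat_add_iff 1).2 Sg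
  -- Uop at 0
  have hU0 : Uop m f 0 = g 0 + ∑' i, g (i+1) := Summable.tsum_eq_zero_add Sg
  -- Uop at theta
  have hterm : ∀ i : ℕ, Pfun m (i+m) (theta m) * f (uMap m (i+m) (theta m))
      = (((m:ℝ)+1)/m) * g (i+1) := by
    intro i
    rw [P_theta hm (i+m), u_theta hm (i+m)]
    simp only [hg]
    rw [show (i+m)+1 = (i+1)+m from by omega]
    ring
  have hUθ : Uop m f (theta m) = (((m:ℝ)+1)/m) * ∑' i, g (i+1) := by
    rw [Uop]
    simp only [hterm]
    exact tsum_mul_left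
  -- first term of g
  have hg0 : g 0 = (1/((m:ℝ)+1)) * f (theta m) := by
    simp only [hg, Nat.zero_add, P_m_zero hm, u_m_zero hm]
  -- sum of shifted P at 0
  have hPsum : HasSum (fun i : ℕ => Pfun m (i+m) 0) 1 := hasSum_P hm hz
  have hP1 : Summable (fun i : ℕ => Pfun m ((i+1)+m) 0) :=
    (summable_nat_add_iff 1).2 hPsum.summable
  have hPshift : ∑' i : ℕ, Pfun m ((i+1)+m) 0 = (m:ℝ)/(m+1) := by
    have := Summable.tsum_eq_zero_add hPsum.summable
    rw [hPsum.tsum_eq] at this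
    have h0 : Pfun m (0+m) 0 = 1/((m:ℝ)+1) := by
      rw [show 0+m = m from by omega, P_m_zero hm]
    rw [h0] at this
    field_simp at this ⊢
    linarith
  -- lower bound on S
  have hSlb : (f 0) * ((m:ℝ)/(m+1)) ≤ ∑' i, g (i+1) := by
    have hle : ∀ i : ℕ, Pfun m ((i+1)+m) 0 * f 0 ≤ g (i+1) := by
      intro i
      have hPn := P_nonneg hm (Nat.le_add_left m (i+1)) hz
      have humem := u_mem hm (Nat.le_add_left m (i+1)) h0mem
      have : f 0 ≤ f (uMap m ((i+1)+m) 0) := hf h0mem humem humem.1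
      exact mul_le_mul_of_nonneg_left this hPn
    calc (f 0) * ((m:ℝ)/(m+1)) = ∑' i : ℕ, Pfun m ((i+1)+m) 0 * f 0 := by
          rw [tsum_mul_right, hPshift]; ring
      _ ≤ ∑' i, g (i+1) := Summable.tsum_le_tsum hle (hP1.mul_right _) Sg1
  -- conclude
  rw [hU0, hUθ, hg0]
  set S := ∑' i, g (i+1) with hS
  have hm1 : (0:ℝ) < (m:ℝ)+1 := by positivity
  have h' : f 0 * m ≤ S * ((m:ℝ)+1) := by
    have h'' := mul_le_mul_of_nonneg_right hSlb hm1.le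
    calc f 0 * m = f 0 * ((m:ℝ)/(m+1)) * ((m:ℝ)+1) := by
          rw [mul_assoc, div_mul_cancel₀ _ hm1.ne']
      _ ≤ S * ((m:ℝ)+1) := h''
  have em : ((m:ℝ)+1)/m = 1 + 1/m := by rw [add_div, div_self hm0.ne']
  have e1 : (1/((m:ℝ)+1)) * f (theta m) + S - ((m:ℝ)+1)/m * S
      = f (theta m)/((m:ℝ)+1) - S/m := by rw [em]; ring
  rw [e1, div_sub_div _ _ hm1.ne' hm0.ne', div_le_div_iff₀ (mul_pos hm1 hm0) hm1]
  nlinarith [mul_nonneg (sub_nonneg.2 h') hm1.le]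

lemma eVariationOn_neg' (f : ℝ → ℝ) (s : Set ℝ) :
    eVariationOn (fun x => -f x) s = eVariationOn f s := by
  simp only [eVariationOn, edist_neg_neg]

lemma Uop_neg (m : ℕ) (f : ℝ → ℝ) :
    Uop m (fun z => -f z) = fun x => -(Uop m f x) := by
  funext x
  simp only [Uop, mul_neg]
  exact tsum_neg

lemma master (hm : 2 ≤ m) {f : ℝ → ℝ} {C : ℝ}
    (hC : ∀ x ∈ Icc 0 (theta m), |f x| ≤ C)
    (hf : MonotoneOn f (Icc 0 (theta m))) :
    eVariationOn (Uop m f) (Icc 0 (theta m)) ≤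
      ((m : ℝ≥0∞) + 1)⁻¹ * eVariationOn f (Icc 0 (theta m)) := by
  have ht := theta_pos hm
  have hm0 := m_cast_pos hm
  have hm1 : (0:ℝ) < (m:ℝ)+1 := by positivity
  have h0mem : (0:ℝ) ∈ Icc 0 (theta m) := ⟨le_refl _, ht.le⟩
  have hθmem : theta m ∈ Icc 0 (theta m) := ⟨ht.le, le_refl _⟩
  have hanti := Uop_anti hm hC hf
  have hmonoNeg : MonotoneOn (fun x => -(Uop m f x)) (Icc 0 (theta m)) :=
    fun x hx y hy hxy => neg_le_neg (hanti hx hy hxy)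
  have h1 : eVariationOn (Uop m f) (Icc 0 (theta m)) ≤
      ENNReal.ofReal (Uop m f 0 - Uop m f (theta m)) := by
    have h := hmonoNeg.eVariationOn_le h0mem hθmem
    rw [Set.inter_self, eVariationOn_neg' (Uop m f), neg_sub_neg] at h
    exact h
  have h2 := Uop_endpoint hm hC hf
  have hsub : 0 ≤ f (theta m) - f 0 := sub_nonneg.2 (hf h0mem hθmem ht.le)
  have h3 : ENNReal.ofReal ((f (theta m) - f 0)/((m:ℝ)+1))
      = ((m : ℝ≥0∞) + 1)⁻¹ * ENNReal.ofReal (f (theta m) - f 0) := by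
    rw [div_eq_mul_inv, ENNReal.ofReal_mul hsub,
      ENNReal.ofReal_inv_of_pos hm1,
      ENNReal.ofReal_add (by positivity : (0:ℝ) ≤ (m:ℝ)) zero_le_one,
      ENNReal.ofReal_natCast, ENNReal.ofReal_one, mul_comm]
  have h4 : ENNReal.ofReal (f (theta m) - f 0) ≤ eVariationOn f (Icc 0 (theta m)) := by
    have h := eVariationOn.edist_le f hθmem h0mem
    rwa [edist_dist, Real.dist_eq, abs_of_nonneg hsub] at h
  calc eVariationOn (Uop m f) (Icc 0 (theta m))
      ≤ ENNReal.ofReal (Uop m f 0 - Uop m f (theta m)) := h1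
    _ ≤ ENNReal.ofReal ((f (theta m) - f 0)/((m:ℝ)+1)) := ENNReal.ofReal_le_ofReal h2
    _ = ((m : ℝ≥0∞) + 1)⁻¹ * ENNReal.ofReal (f (theta m) - f 0) := h3
    _ ≤ ((m : ℝ≥0∞) + 1)⁻¹ * eVariationOn f (Icc 0 (theta m)) := mul_le_mul_right h4 _

/-- If f is bounded and monotone then var(Uf) ≤ (1/(m+1))·var(f),
where var denotes the total variation on [0,θ]. -/
theorem Uop_variation_bound (m : ℕ) (hm : 2 ≤ m) (hns : ¬ IsSquare m)
    (f : ℝ → ℝ)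
    (hbdd : ∃ C : ℝ, ∀ x ∈ Icc 0 (theta m), |f x| ≤ C)
    (hmono : MonotoneOn f (Icc 0 (theta m)) ∨ AntitoneOn f (Icc 0 (theta m))) :
    eVariationOn (Uop m f) (Icc 0 (theta m)) ≤
      ((m : ℝ≥0∞) + 1)⁻¹ * eVariationOn f (Icc 0 (theta m)) := by
  obtain ⟨C, hC⟩ := hbdd
  rcases hmono with h | h
  · exact master hm hC h
  · have hCneg : ∀ x ∈ Icc 0 (theta m), |(fun z => -f z) x| ≤ C := by
      intro x hx; simpa [abs_neg] using hC x hx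
    have hneg : MonotoneOn (fun z => -f z) (Icc 0 (theta m)) :=
      fun x hx y hy hxy => neg_le_neg (h hx hy hxy)
    have hmain := master hm hCneg hneg
    rw [Uop_neg, eVariationOn_neg' (Uop m f), eVariationOn_neg' f] at hmain
    exact hmain
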